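/- In the n-th OR-power of the digraph M(T_n)∖{z}, where T_n is the transitive tournament on n vertices, there exists a transitive clique of size n^n every vertex of which has a coordinate in V(T_n)×{1}. -/

import Mathlib

/-- The `t`-th OR-power of a digraph (given as an arc relation): there is an arc from
`x` to `y` iff in some coordinate `(x i, y i)` is an arc. -/
def dORpow {V : Type*} (D : V → V → Prop) (t : ℕ) : (Fin t → V) → (Fin t → V) → Prop :=
  fun x y => ∃ i, D (x i) (y i)

/-- The Mycielskian of a digraph: vertex set `V × {0,1} ∪ {z}`, arcs `((v,0),(w,i))` and
`((v,1),(w,0))` for arcs `(v,w)`, `i ∈ {0,1}`, and arcs `(z,(v,1))` for all `v`. -/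
def dMycielskian {V : Type*} (D : V → V → Prop) :
    (V × Bool ⊕ Unit) → (V × Bool ⊕ Unit) → Prop
  | Sum.inl (v, a), Sum.inl (w, b) => D v w ∧ (a = false ∨ b = false)
  | Sum.inr _, Sum.inl (_, b) => b = true
  | _, _ => False

/-- The Mycielskian of a digraph with the top vertex removed (induced on `V × {0,1}`). -/
def dMycielskianCore {V : Type*} (D : V → V → Prop) : (V × Bool) → (V × Bool) → Prop :=
  fun x y => D x.1 y.1 ∧ (x.2 = false ∨ y.2 = false)

/-- `f` lists a transitive clique of size `m` in the digraph `D`: the vertices are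
distinct and every earlier one sends an arc to every later one. -/
def IsTransClique {V : Type*} (D : V → V → Prop) (m : ℕ) (f : Fin m → V) : Prop :=
  Function.Injective f ∧ ∀ i j : Fin m, i < j → D (f i) (f j)

/-- The transitive clique number `ω_tr` of a digraph. -/
noncomputable def transCliqueNum {V : Type*} (D : V → V → Prop) : ℕ :=
  sSup {m | ∃ f : Fin m → V, IsTransClique D m f}

/-- The transitive tournament on `n` vertices. -/
def transTournament (n : ℕ) : Fin n → Fin n → Prop := fun i j => i < j

namespace MycAux

/-- The linear order on lexicographic tuples; stated explicitly since instance search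
gets stuck on the non-dependent function type. -/
noncomputable instance pilexLO (n : ℕ) : LinearOrder (Lex (Fin n → Fin n)) :=
  haveI h1 : WellFoundedLT (Fin n) := inferInstance
  @Pi.Lex.linearOrder (Fin n) (fun _ => Fin n) inferInstance h1
    (fun _ => inferInstance)

/-- Integer sum of the values of `g`. -/
def S {n : ℕ} (g : Fin n → Fin n) : ℕ := ∑ i, (g i : ℕ)

/-- The distinguished coordinate of `g`: the sum of its values mod `n`. -/
def sf {n : ℕ} (hn : 0 < n) (g : Fin n → Fin n) : Fin n := ⟨S g % n, Nat.mod_lt _ hn⟩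

/-- The sorting key: first the integer sum, then the lexicographic order of `g`
rotated so that the distinguished coordinate is compared last. -/
noncomputable def key {n : ℕ} (hn : 0 < n) (g : Fin n → Fin n) :
    ℕ ×ₗ Lex (Fin n → Fin n) :=
  haveI : NeZero n := ⟨hn.ne'⟩
  toLex (S g, toLex (fun j => g ((sf hn g + 1) + j)))

theorem key_inj {n : ℕ} (hn : 0 < n) : Function.Injective (key hn) := by
  haveI : NeZero n := ⟨hn.ne'⟩
  intro g h hk
  have h1 : S g = S h :=
    congrArg (fun p : ℕ ×ₗ Lex (Fin n → Fin n) => (ofLex p).1) hk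
  have hs : sf hn g = sf hn h := by
    apply Fin.ext; simp only [sf]; rw [h1]
  have h2 : (fun j => g ((sf hn g + 1) + j)) = (fun j => h ((sf hn h + 1) + j)) :=
    congrArg (fun p : ℕ ×ₗ Lex (Fin n → Fin n) => (ofLex (ofLex p).2 : Fin n → Fin n)) hk
  funext d
  have h3 := congrFun h2 ((Equiv.addLeft (sf hn g + 1)).symm d)
  have h4 : (sf hn g + 1) + (Equiv.addLeft (sf hn g + 1)).symm d = d :=
    (Equiv.addLeft (sf hn g + 1)).apply_symm_apply d
  rw [← hs] at h3
  rw [h4] at h3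
  exact h3

theorem exists_lt_of_sum_lt {n : ℕ} {g h : Fin n → Fin n} (hlt : S g < S h) :
    ∃ c, g c < h c := by
  by_contra hno
  push_neg at hno
  have : S h ≤ S g := Finset.sum_le_sum fun c _ => (hno c : (h c : ℕ) ≤ g c)
  omega

theorem key_lt {n : ℕ} (hn : 0 < n) {g h : Fin n → Fin n} (hlt : key hn g < key hn h) :
    ∃ c, g c < h c ∧ (c ≠ sf hn g ∨ c ≠ sf hn h) := by
  haveI : NeZero n := ⟨hn.ne'⟩
  rw [key, key, Prod.Lex.lt_iff] at hlt
  rcases hlt with hS | ⟨hS, hlex⟩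
  · -- integer sums differ
    have hSlt : S g < S h := hS
    by_contra hno
    push_neg at hno
    obtain ⟨c₀, hc₀⟩ := exists_lt_of_sum_lt hSlt
    obtain ⟨hcg, hch⟩ := hno c₀ hc₀
    have hmod : S g % n = S h % n := by
      have : (sf hn g : ℕ) = (sf hn h : ℕ) := by rw [← hcg, ← hch]
      simpa [sf] using this
    -- every coordinate other than c₀ has h ≤ g
    have hle : ∀ c, c ≠ c₀ → (h c : ℕ) ≤ g c := by
      intro c hc
      by_contra hgt
      push_neg at hgt
      obtain ⟨h1, _⟩ := hno c hgt
      exact hc (h1.trans hcg.symm)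
    have hbound : S h ≤ S g + (n - 1) := by
      calc S h ≤ ∑ c, ((g c : ℕ) + if c = c₀ then n - 1 else 0) := by
            apply Finset.sum_le_sum
            intro c _
            by_cases hc : c = c₀
            · rw [hc, if_pos rfl]
              have := (h c₀).isLt
              omega
            · rw [if_neg hc, add_zero]
              exact hle c hc
        _ = S g + (n - 1) := by
            rw [Finset.sum_add_distrib, Finset.sum_ite_eq' Finset.univ c₀ fun _ => n - 1]
            simp [S]
    have hdvd : n ∣ S h - S g := (Nat.modEq_iff_dvd' hSlt.le).mp hmod
    have := Nat.le_of_dvd (by omega) hdvd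
    omega
  · -- equal sums, lexicographic comparison of rotated functions
    have hSeq : S g = S h := hS
    have hs : sf hn g = sf hn h := by apply Fin.ext; simp only [sf]; rw [hSeq]
    set s := sf hn g with hsdef
    have hlex' : Pi.Lex (· < ·) (@fun _ => (· < ·))
        (fun j => g ((s + 1) + j)) (fun j => h ((sf hn h + 1) + j)) := hlex
    obtain ⟨j₀, hpre, hj₀⟩ := hlex'
    rw [← hs] at hj₀ hpre
    have hj₀' : g ((s + 1) + j₀) < h ((s + 1) + j₀) := hj₀
    by_cases hc : (s + 1) + j₀ = s
    · exfalso
      -- then j₀ is the last index, so g and h agree off s, contradicting S g = S h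
      have hj₀val : (j₀ : ℕ) = n - 1 := by
        rcases Nat.lt_or_ge n 2 with h2 | h2
        · have := j₀.isLt; omega
        · have h10 : (1 : Fin n) + j₀ = 0 := by
            have : s + ((1 : Fin n) + j₀) = s + 0 := by rw [← add_assoc, hc, add_zero]
            exact add_left_cancel this
          have hval : ((1 : Fin n) + j₀).val = 0 := by rw [h10]; rfl
          rw [Fin.val_add, Fin.val_one'] at hval
          have h1n : 1 % n = 1 := Nat.mod_eq_of_lt h2
          rw [h1n] at hval
          have hdvd := Nat.dvd_of_mod_eq_zero hval
          have hle := Nat.le_of_dvd (by omega) hdvd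
          have := j₀.isLt
          omega
      have hoff : ∀ d : Fin n, d ≠ s → g d = h d := by
        intro d hd
        set k := (Equiv.addLeft (s + 1)).symm d with hk
        have hdk : (s + 1) + k = d := (Equiv.addLeft (s + 1)).apply_symm_apply d
        have hkj : k ≠ j₀ := by
          intro hkj; rw [hkj] at hdk; exact hd (hdk.symm ▸ hc)
        have hklt : k < j₀ := by
          rw [Fin.lt_def, hj₀val]
          have := k.isLt
          have : (k : ℕ) ≠ n - 1 := fun h' => hkj (Fin.ext (h'.trans hj₀val.symm))
          omega
        have h5 : g ((s + 1) + k) = h ((s + 1) + k) := hpre k hklt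
        rwa [hdk] at h5
      -- now S g = S h forces g s = h s, contradicting g s < h s
      rw [hc] at hj₀'
      have e1 : (g s : ℕ) + ∑ d ∈ Finset.univ.erase s, (g d : ℕ) = S g :=
        Finset.add_sum_erase _ (fun d => (g d : ℕ)) (Finset.mem_univ s)
      have e2 : (h s : ℕ) + ∑ d ∈ Finset.univ.erase s, (h d : ℕ) = S h :=
        Finset.add_sum_erase _ (fun d => (h d : ℕ)) (Finset.mem_univ s)
      have hrest : ∑ d ∈ Finset.univ.erase s, (g d : ℕ)
          = ∑ d ∈ Finset.univ.erase s, (h d : ℕ) := by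
        apply Finset.sum_congr rfl
        intro d hd
        rw [hoff d (Finset.ne_of_mem_erase hd)]
      have : (g s : ℕ) = h s := by omega
      exact absurd (Fin.lt_def.mp hj₀') (by omega)
    · exact ⟨(s + 1) + j₀, hj₀', Or.inl hc⟩

end MycAux

/-- In the `n`-th OR-power of `M(T_n) ∖ {z}` there is a transitive clique of size `n^n`
every vertex of which has a coordinate in `V(T_n) × {1}`. -/
theorem transClique_in_dORpow_mycielskianCore (n : ℕ) (hn : 1 ≤ n) :
    ∃ f : Fin (n ^ n) → (Fin n → Fin n × Bool),
      IsTransClique (dORpow (dMycielskianCore (transTournament n)) n) (n ^ n) f ∧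
      ∀ i, ∃ c, (f i c).2 = true := by
  classical
  have hn0 : 0 < n := hn
  haveI : NeZero n := ⟨hn0.ne'⟩
  let e : Fin (n ^ n) ≃ (Fin n → Fin n) := finFunctionFinEquiv.symm
  let k : Fin (n ^ n) → ℕ ×ₗ Lex (Fin n → Fin n) := fun i => MycAux.key hn0 (e i)
  let σ : Equiv.Perm (Fin (n ^ n)) := Tuple.sort k
  refine ⟨fun i => fun c => (e (σ i) c, decide (c = MycAux.sf hn0 (e (σ i)))), ⟨?_, ?_⟩, ?_⟩
  · intro i j hij
    have hge : e (σ i) = e (σ j) := by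
      funext c
      exact congrArg Prod.fst (congrFun hij c)
    exact σ.injective (e.injective hge)
  · intro i j hij
    have hmono : k (σ i) ≤ k (σ j) := Tuple.monotone_sort k hij.le
    have hne : MycAux.key hn0 (e (σ i)) ≠ MycAux.key hn0 (e (σ j)) := by
      intro hkeq
      exact hij.ne (σ.injective (e.injective (MycAux.key_inj hn0 hkeq)))
    have hklt : MycAux.key hn0 (e (σ i)) < MycAux.key hn0 (e (σ j)) :=
      lt_of_le_of_ne hmono hne
    obtain ⟨c, hc1, hc2⟩ := MycAux.key_lt hn0 hklt
    refine ⟨c, hc1, ?_⟩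
    rcases hc2 with hc2 | hc2
    · exact Or.inl (by simpa using hc2)
    · exact Or.inr (by simpa using hc2)
  · intro i
    exact ⟨MycAux.sf hn0 (e (σ i)), by simp⟩
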